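/- Let K ⊂ T be nonempty compact with positive first coordinates and B = max{b:(a,b)∈K}. Define F: ℝ → ℝ by F(θ) = max_{(a,b)∈K} ab for θ ≤ 0, F(θ) = max_{(a,b)∈K}{ab + θ(b−a)} for θ ∈ [0,B], and F(θ) = θ² for θ ≥ B. Then F is convex on ℝ. -/

import Mathlib

/-- The triangle `T = {(x,y) : 0 ≤ x ≤ y}`. -/
def Tset : Set (ℝ × ℝ) := {p | 0 ≤ p.1 ∧ p.1 ≤ p.2}

/-- `B = max{b : (a,b) ∈ K}`. -/
noncomputable def BK (K : Set (ℝ × ℝ)) : ℝ := sSup (Prod.snd '' K)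

/-- `m(θ) = max_{(a,b) ∈ K} {ab + θ(b − a)}`. -/
noncomputable def mK (K : Set (ℝ × ℝ)) (θ : ℝ) : ℝ :=
  sSup ((fun p : ℝ × ℝ => p.1 * p.2 + θ * (p.2 - p.1)) '' K)

/-- `F(θ) = max ab` for `θ ≤ 0`, `F(θ) = m(θ)` on `[0,B]`, and `F(θ) = θ²` for `θ ≥ B`. -/
noncomputable def FK (K : Set (ℝ × ℝ)) (θ : ℝ) : ℝ :=
  if θ ≤ 0 then mK K 0 else if θ ≤ BK K then mK K θ else θ ^ 2

theorem F_convex (K : Set (ℝ × ℝ)) (hK : IsCompact K) (hne : K.Nonempty)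
    (hT : K ⊆ Tset) (hpos : ∀ p ∈ K, 0 < p.1) :
    ConvexOn ℝ Set.univ (FK K) := by
  set B := BK K with hBdef
  have hcont : ∀ θ : ℝ, Continuous (fun p : ℝ × ℝ => p.1 * p.2 + θ * (p.2 - p.1)) := by
    intro θ; fun_prop
  have hbdd : ∀ θ : ℝ, BddAbove ((fun p : ℝ × ℝ => p.1 * p.2 + θ * (p.2 - p.1)) '' K) :=
    fun θ => (hK.image (hcont θ)).bddAbove
  have hneim : ∀ θ : ℝ, ((fun p : ℝ × ℝ => p.1 * p.2 + θ * (p.2 - p.1)) '' K).Nonempty :=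
    fun θ => hne.image _
  have hle : ∀ θ : ℝ, ∀ p ∈ K, p.1 * p.2 + θ * (p.2 - p.1) ≤ mK K θ :=
    fun θ p hp => le_csSup (hbdd θ) ⟨p, hp, rfl⟩
  have hsle : ∀ (θ c : ℝ), (∀ p ∈ K, p.1 * p.2 + θ * (p.2 - p.1) ≤ c) → mK K θ ≤ c := by
    intro θ c h
    exact csSup_le (hneim θ) (by rintro x ⟨p, hp, rfl⟩; exact h p hp)
  -- facts about B
  have hBbdd : BddAbove (Prod.snd '' K) := (hK.image continuous_snd).bddAbove
  have hBle : ∀ p ∈ K, p.2 ≤ B := fun p hp => le_csSup hBbdd ⟨p, hp, rfl⟩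
  obtain ⟨p₀, hp₀⟩ := hne
  have hBpos : 0 < B :=
    lt_of_lt_of_le (lt_of_lt_of_le (hpos p₀ hp₀) (hT hp₀).2) (hBle p₀ hp₀)
  have hBattained : ∃ p ∈ K, p.2 = B := by
    have hmem : sSup (Prod.snd '' K) ∈ Prod.snd '' K :=
      (hK.image continuous_snd).sSup_mem ((Set.nonempty_of_mem hp₀).image _)
    obtain ⟨q, hqK, hq⟩ := hmem
    exact ⟨q, hqK, hq⟩
  obtain ⟨q₀, hq₀K, hq₀⟩ := hBattained
  -- monotonicity of m
  have hmono : ∀ θ₁ θ₂ : ℝ, θ₁ ≤ θ₂ → mK K θ₁ ≤ mK K θ₂ := by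
    intro θ₁ θ₂ h
    apply hsle
    intro p hp
    have hba : 0 ≤ p.2 - p.1 := sub_nonneg.mpr (hT hp).2
    have := hle θ₂ p hp
    nlinarith [mul_le_mul_of_nonneg_right h hba]
  have hm0 : 0 ≤ mK K 0 := by
    have h := hle 0 p₀ hp₀
    have h1 : 0 ≤ p₀.1 * p₀.2 :=
      mul_nonneg (hT hp₀).1 (le_trans (hT hp₀).1 (hT hp₀).2)
    nlinarith
  -- convexity of m
  have hmconv : ConvexOn ℝ Set.univ (mK K) := by
    refine ⟨convex_univ, ?_⟩
    intro x _ y _ a b ha hb hab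
    simp only [smul_eq_mul]
    apply hsle
    intro p hp
    have h1 := mul_le_mul_of_nonneg_left (hle x p hp) ha
    have h2 := mul_le_mul_of_nonneg_left (hle y p hp) hb
    have key : p.1 * p.2 + (a * x + b * y) * (p.2 - p.1)
        = a * (p.1 * p.2 + x * (p.2 - p.1)) + b * (p.1 * p.2 + y * (p.2 - p.1)) := by
      linear_combination (-(p.1 * p.2)) * hab
    linarith
  -- the auxiliary convex function u
  set u : ℝ → ℝ := fun θ => max (θ - B) 0 ^ 2 + (2 * B * θ - B ^ 2) with hudef
  have huconv : ConvexOn ℝ Set.univ u := by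
    refine ⟨convex_univ, ?_⟩
    intro x _ y _ a b ha hb hab
    simp only [smul_eq_mul, hudef]
    set X := max (x - B) 0 with hX
    set Y := max (y - B) 0 with hY
    have hX1 : x - B ≤ X := le_max_left _ _
    have hX0 : 0 ≤ X := le_max_right _ _
    have hY1 : y - B ≤ Y := le_max_left _ _
    have hY0 : 0 ≤ Y := le_max_right _ _
    have h1 : max (a * x + b * y - B) 0 ≤ a * X + b * Y := by
      apply max_le
      · nlinarith [mul_le_mul_of_nonneg_left hX1 ha, mul_le_mul_of_nonneg_left hY1 hb]
      · positivity
    have h2 : max (a * x + b * y - B) 0 ^ 2 ≤ (a * X + b * Y) ^ 2 :=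
      pow_le_pow_left₀ (le_max_right _ _) h1 2
    have h3 : (a * X + b * Y) ^ 2 ≤ a * X ^ 2 + b * Y ^ 2 := by
      have hid : a * X ^ 2 + b * Y ^ 2 - (a * X + b * Y) ^ 2 = a * b * (X - Y) ^ 2 := by
        linear_combination (-(a * X ^ 2 + b * Y ^ 2)) * hab
      nlinarith [mul_nonneg (mul_nonneg ha hb) (sq_nonneg (X - Y))]
    have h4 : a * B ^ 2 + b * B ^ 2 = B ^ 2 := by linear_combination B ^ 2 * hab
    nlinarith [h2, h3, h4]
  -- F equals the pointwise max of the three convex functions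
  have hEq : FK K = (fun _ : ℝ => mK K 0) ⊔ mK K ⊔ u := by
    funext θ
    simp only [Pi.sup_apply, FK]
    rcases le_or_gt θ 0 with h0 | h0
    · rw [if_pos h0]
      have h1 : mK K θ ≤ mK K 0 := hmono θ 0 h0
      have h2 : u θ ≤ mK K 0 := by
        have hmx : max (θ - B) 0 = 0 := max_eq_right (by linarith)
        simp only [hudef, hmx]
        nlinarith [mul_nonneg hBpos.le (neg_nonneg.mpr h0)]
      rw [max_eq_left h1, max_eq_left h2]
    · rw [if_neg (not_le.mpr h0)]
      rcases le_or_gt θ B with hB | hB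
      · rw [if_pos hB]
        have h1 : mK K 0 ≤ mK K θ := hmono 0 θ h0.le
        have h2 : u θ ≤ mK K θ := by
          have hmx : max (θ - B) 0 = 0 := max_eq_right (by linarith)
          simp only [hudef, hmx]
          have hw := hle θ q₀ hq₀K
          rw [hq₀] at hw
          have ha0 : 0 < q₀.1 := hpos q₀ hq₀K
          nlinarith [mul_nonneg ha0.le (sub_nonneg.mpr hB), mul_nonneg hBpos.le (sub_nonneg.mpr hB)]
        rw [max_eq_right h1, max_eq_left h2]
      · rw [if_neg (not_le.mpr hB)]
        have hmθ : mK K θ ≤ θ ^ 2 := by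
          apply hsle
          intro p hp
          have h1 : 0 ≤ p.1 := (hT hp).1
          have h2 : p.1 ≤ p.2 := (hT hp).2
          have h3 : p.2 ≤ B := hBle p hp
          nlinarith [mul_nonneg (by linarith : (0:ℝ) ≤ p.1 + θ) (by linarith : (0:ℝ) ≤ θ - p.2)]
        have hm0θ : mK K 0 ≤ θ ^ 2 := le_trans (hmono 0 θ (by linarith)) hmθ
        have huθ : u θ = θ ^ 2 := by
          have hmx : max (θ - B) 0 = θ - B := max_eq_left (by linarith)
          simp only [hudef, hmx]
          ring
        rw [huθ, max_eq_right (max_le hm0θ hmθ)]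
  rw [hEq]
  exact ((convexOn_const _ convex_univ).sup hmconv).sup huconv
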